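/- Let K be an algebraically closed field complete with respect to a non-trivial non-archimedean absolute value with residue field k, and let h ∈ K(z) have degree d > 0 and a ∈ P^1(K). Let H = (H₀,H₁) be a minimal lift of h and p ∈ K² a representative of a with ‖p‖ = 1. If ‖H(p)‖ = 1, then the reduction of h(a) modulo the maximal ideal equals the point of P^1(k) represented by (H̃₀(p̃), H̃₁(p̃)), where tilde denotes reduction of coordinates and coefficients modulo the maximal ideal m_K. -/

import Mathlib

/-- Dehomogenization `H(1, X)` of a binary form. -/
noncomputable def toUni {K : Type*} [CommRing K] (H : MvPolynomial (Fin 2) K) : Polynomial K :=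
  MvPolynomial.aeval ![(1 : Polynomial K), Polynomial.X] H

/-- The Sylvester matrix of a pair of binary forms of degree `d`. -/
noncomputable def sylv {K : Type*} [CommRing K] (d : ℕ) (F G : Polynomial K) :
    Matrix (Fin (d + d)) (Fin (d + d)) K := fun i j =>
  if (i : ℕ) < d then
    (if (i : ℕ) ≤ (j : ℕ) ∧ (j : ℕ) ≤ (i : ℕ) + d then
      F.coeff (d - ((j : ℕ) - (i : ℕ))) else 0)
  else
    (if (i : ℕ) - d ≤ (j : ℕ) ∧ (j : ℕ) ≤ ((i : ℕ) - d) + d then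
      G.coeff (d - ((j : ℕ) - ((i : ℕ) - d))) else 0)

/-- The homogeneous resultant of a pair of degree-`d` binary forms. -/
noncomputable def res2 {K : Type*} [CommRing K] (d : ℕ) (H₀ H₁ : MvPolynomial (Fin 2) K) : K :=
  (sylv d (toUni H₀) (toUni H₁)).det

/-- The ring of integers `O_K = {x : |x| ≤ 1}` of a non-archimedean valued field. -/
def intRing {K : Type*} [Field K] (v : AbsoluteValue K ℝ)
    (hna : ∀ x y : K, v (x + y) ≤ max (v x) (v y)) : Subring K where
  carrier := {x : K | v x ≤ 1}
  mul_mem' := by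
    intro a b ha hb
    simp only [Set.mem_setOf_eq, map_mul] at *
    calc v a * v b ≤ 1 * 1 := mul_le_mul ha hb (v.nonneg b) zero_le_one
      _ = 1 := one_mul 1
  one_mem' := by simp [Set.mem_setOf_eq]
  add_mem' := by
    intro a b ha hb
    exact le_trans (hna a b) (max_le ha hb)
  zero_mem' := by simp [Set.mem_setOf_eq]
  neg_mem' := by
    intro a ha
    show v (-a) ≤ 1
    rw [v.map_neg]
    exact ha

/-- The maximal ideal `m_K = {x : |x| < 1}` of `O_K`. -/
def maxIdeal {K : Type*} [Field K] (v : AbsoluteValue K ℝ)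
    (hna : ∀ x y : K, v (x + y) ≤ max (v x) (v y)) : Ideal (intRing v hna) where
  carrier := {x : intRing v hna | v (x : K) < 1}
  add_mem' := by
    intro a b ha hb
    exact lt_of_le_of_lt (hna (a : K) (b : K)) (max_lt ha hb)
  zero_mem' := by simp [Set.mem_setOf_eq]
  smul_mem' := by
    intro c x hx
    simp only [Set.mem_setOf_eq, smul_eq_mul] at *
    calc v ((c : K) * (x : K)) = v (c : K) * v (x : K) := map_mul v _ _
      _ ≤ 1 * v (x : K) := mul_le_mul_of_nonneg_right c.2 (v.nonneg _)
      _ = v (x : K) := one_mul _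
      _ < 1 := hx

/-- Let `K` be an algebraically closed field complete with respect to a non-trivial
non-archimedean absolute value, with residue field `k = O_K/m_K`. Let `h` be a
rational map of degree `d > 0` with minimal lift `H` (coefficients in `O_K`, maximal
coefficient absolute value `1`, nonzero resultant), let `p` represent `a ∈ P¹(K)`
with `‖p‖ = 1`, and suppose `‖H(p)‖ = 1`. Then the reduction modulo `m_K` of
`h(a)` (which is represented by any `q` with `‖q‖ = 1` proportional over `K` to
`H(p)`) equals the point of `P¹(k)` represented by `(H̃₀(p̃), H̃₁(p̃))`. -/
theorem stmt_19 {K : Type*} [Field K] [IsAlgClosed K] (v : AbsoluteValue K ℝ)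
    (hna : ∀ x y : K, v (x + y) ≤ max (v x) (v y))
    (hnt : ∃ x : K, x ≠ 0 ∧ v x ≠ 1)
    (hcomp : ∀ s : ℕ → K,
      (∀ ε : ℝ, 0 < ε → ∃ N, ∀ m ≥ N, ∀ n ≥ N, v (s m - s n) < ε) →
      ∃ L : K, ∀ ε : ℝ, 0 < ε → ∃ N, ∀ n ≥ N, v (s n - L) < ε)
    (d : ℕ) (hd : 0 < d)
    (H : Fin 2 → MvPolynomial (Fin 2) (intRing v hna))
    (hhom : ∀ i, (MvPolynomial.map (intRing v hna).subtype (H i)).IsHomogeneous d)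
    (hres : res2 d (MvPolynomial.map (intRing v hna).subtype (H 0))
        (MvPolynomial.map (intRing v hna).subtype (H 1)) ≠ 0)
    (hmin : ∃ (i : Fin 2) (n : Fin 2 →₀ ℕ), v (((H i).coeff n : intRing v hna) : K) = 1)
    (p : Fin 2 → intRing v hna)
    (hp : max (v (p 0 : K)) (v (p 1 : K)) = 1)
    (hHp : max
        (v (MvPolynomial.eval (fun j => (p j : K))
          (MvPolynomial.map (intRing v hna).subtype (H 0))))
        (v (MvPolynomial.eval (fun j => (p j : K))
          (MvPolynomial.map (intRing v hna).subtype (H 1)))) = 1)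
    (q : Fin 2 → intRing v hna)
    (hq : max (v (q 0 : K)) (v (q 1 : K)) = 1)
    (hrep : ∃ c : K, c ≠ 0 ∧ ∀ i, (q i : K) =
      c * MvPolynomial.eval (fun j => (p j : K))
        (MvPolynomial.map (intRing v hna).subtype (H i))) :
    ∃ c : (intRing v hna) ⧸ (maxIdeal v hna), c ≠ 0 ∧ ∀ i,
      Ideal.Quotient.mk (maxIdeal v hna) (q i) =
        c * MvPolynomial.eval (fun j => Ideal.Quotient.mk (maxIdeal v hna) (p j))
          (MvPolynomial.map (Ideal.Quotient.mk (maxIdeal v hna)) (H i)) := by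
  classical
  obtain ⟨c, hc0, hci⟩ := hrep
  have hcomm : ∀ {S : Type _} [inst : CommRing S] (f : (intRing v hna) →+* S)
      (P : MvPolynomial (Fin 2) (intRing v hna)),
      f (MvPolynomial.eval p P) =
        MvPolynomial.eval (fun j => f (p j)) (MvPolynomial.map f P) := by
    intro S inst f P
    rw [MvPolynomial.eval_map]
    have h := MvPolynomial.eval₂_comp_left f (RingHom.id (intRing v hna)) p P
    simpa [Function.comp_def] using h
  have hecoe : ∀ i, ((MvPolynomial.eval p (H i) : intRing v hna) : K) =
      MvPolynomial.eval (fun j => (p j : K)) (MvPolynomial.map (intRing v hna).subtype (H i)) := by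
    intro i; exact hcomm (intRing v hna).subtype (H i)
  have hvq : ∀ i, v (q i : K) = v c * v ((MvPolynomial.eval p (H i) : intRing v hna) : K) := by
    intro i; rw [hci i, map_mul, hecoe i]
  have hvc : v c = 1 := by
    have key : max (v (q 0 : K)) (v (q 1 : K)) = v c * max
        (v ((MvPolynomial.eval p (H 0) : intRing v hna) : K))
        (v ((MvPolynomial.eval p (H 1) : intRing v hna) : K)) := by
      rw [hvq 0, hvq 1, mul_max_of_nonneg _ _ (v.nonneg c)]
    rw [hq, hecoe 0, hecoe 1, hHp, mul_one] at key
    exact key.symm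
  set C : intRing v hna := ⟨c, le_of_eq hvc⟩ with hC
  refine ⟨Ideal.Quotient.mk (maxIdeal v hna) C, ?_, ?_⟩
  · intro h
    rw [Ideal.Quotient.eq_zero_iff_mem] at h
    have hlt : v c < 1 := h
    rw [hvc] at hlt
    exact lt_irrefl 1 hlt
  · intro i
    have hqe : q i = C * MvPolynomial.eval p (H i) := by
      apply Subtype.ext
      push_cast
      rw [hci i, ← hecoe i]
    rw [hqe, map_mul, hcomm (Ideal.Quotient.mk (maxIdeal v hna)) (H i)]
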